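/- arXiv:2106.09850 — 2 statements merged into one kernel-verified Lean document; each statement's English description precedes it below -/
import Mathlib

section
/- Downward Löwenheim–Skolem for QLET_F: if S is a signature of cardinality λ and Γ is a set of S-sentences that has a model, then Γ has a model whose domain has cardinality at most λ. -/
set_option autoImplicit true
set_option relaxedAutoImplicit true

namespace QLETF

/-- Formulas of a first-order language with a classicality operator `cl` (∘),
a non-classicality operator `ncl` (•), identity `eq`, over a type `K` of
individual constants.  Terms are `ℕ ⊕ K`: `Sum.inl n` is the variable `vₙ`,
`Sum.inr c` is the constant `c`.  Predicate letters are indexed by `ℕ`. -/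
inductive Fm (K : Type) : Type where
  | pred : ℕ → List (ℕ ⊕ K) → Fm K
  | eq   : (ℕ ⊕ K) → (ℕ ⊕ K) → Fm K
  | neg  : Fm K → Fm K
  | conj : Fm K → Fm K → Fm K
  | disj : Fm K → Fm K → Fm K
  | cl   : Fm K → Fm K
  | ncl  : Fm K → Fm K
  | all  : ℕ → Fm K → Fm K
  | ex   : ℕ → Fm K → Fm K

variable {K K' : Type}

/-- Substitution on terms: replace the variable `x` by the term `t`. -/
def substT (x : ℕ) (t : ℕ ⊕ K) : (ℕ ⊕ K) → (ℕ ⊕ K)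
  | .inl y => if y = x then t else .inl y
  | .inr c => .inr c

/-- `subst x t A` replaces every free occurrence of the variable `x` in `A` by `t`. -/
def subst (x : ℕ) (t : ℕ ⊕ K) : Fm K → Fm K
  | .pred n ts => .pred n (ts.map (substT x t))
  | .eq a b    => .eq (substT x t a) (substT x t b)
  | .neg A     => .neg (subst x t A)
  | .conj A B  => .conj (subst x t A) (subst x t B)
  | .disj A B  => .disj (subst x t A) (subst x t B)
  | .cl A      => .cl (subst x t A)
  | .ncl A     => .ncl (subst x t A)
  | .all y A   => if y = x then .all y A else .all y (subst x t A)
  | .ex y A    => if y = x then .ex y A else .ex y (subst x t A)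

/-- The set of free variables of a formula. -/
def fv : Fm K → Set ℕ
  | .pred _ ts => {y | Sum.inl y ∈ ts}
  | .eq a b    => {y | a = Sum.inl y ∨ b = Sum.inl y}
  | .neg A     => fv A
  | .conj A B  => fv A ∪ fv B
  | .disj A B  => fv A ∪ fv B
  | .cl A      => fv A
  | .ncl A     => fv A
  | .all y A   => fv A \ {y}
  | .ex y A    => fv A \ {y}

/-- The set of all (free or bound) variables occurring in a formula. -/
def vars : Fm K → Set ℕ
  | .pred _ ts => {y | Sum.inl y ∈ ts}
  | .eq a b    => {y | a = Sum.inl y ∨ b = Sum.inl y}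
  | .neg A     => vars A
  | .conj A B  => vars A ∪ vars B
  | .disj A B  => vars A ∪ vars B
  | .cl A      => vars A
  | .ncl A     => vars A
  | .all y A   => insert y (vars A)
  | .ex y A    => insert y (vars A)

/-- The constant `c` occurs in the formula. -/
def cOcc (c : K) : Fm K → Prop
  | .pred _ ts => Sum.inr c ∈ ts
  | .eq a b    => a = Sum.inr c ∨ b = Sum.inr c
  | .neg A     => cOcc c A
  | .conj A B  => cOcc c A ∨ cOcc c B
  | .disj A B  => cOcc c A ∨ cOcc c B
  | .cl A      => cOcc c A
  | .ncl A     => cOcc c A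
  | .all _ A   => cOcc c A
  | .ex _ A    => cOcc c A

/-- A sentence is a formula with no free variables. -/
def Closed (A : Fm K) : Prop := fv A = ∅

/-- The formula contains no occurrence of the operators ∘ and •. -/
def clFree : Fm K → Prop
  | .pred _ _ => True
  | .eq _ _   => True
  | .neg A    => clFree A
  | .conj A B => clFree A ∧ clFree B
  | .disj A B => clFree A ∧ clFree B
  | .cl _     => False
  | .ncl _    => False
  | .all _ A  => clFree A
  | .ex _ A   => clFree A

/-- Alphabetic variance: the least equivalence relation, compatible with the
connectives, that allows renaming a bound variable to a fresh one. -/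
inductive Alpha : Fm K → Fm K → Prop
  | refl (A : Fm K) : Alpha A A
  | symm : Alpha A B → Alpha B A
  | trans : Alpha A B → Alpha B C → Alpha A C
  | negC : Alpha A B → Alpha (.neg A) (.neg B)
  | conjC : Alpha A A' → Alpha B B' → Alpha (.conj A B) (.conj A' B')
  | disjC : Alpha A A' → Alpha B B' → Alpha (.disj A B) (.disj A' B')
  | clC : Alpha A B → Alpha (.cl A) (.cl B)
  | nclC : Alpha A B → Alpha (.ncl A) (.ncl B)
  | allC : Alpha A B → Alpha (.all x A) (.all x B)
  | exC : Alpha A B → Alpha (.ex x A) (.ex x B)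
  | allR (x y : ℕ) (A : Fm K) : y ∉ vars A →
      Alpha (.all x A) (.all y (subst x (Sum.inl y) A))
  | exR (x y : ℕ) (A : Fm K) : y ∉ vars A →
      Alpha (.ex x A) (.ex y (subst x (Sum.inl y) A))

/-- The natural deduction system QLET_F (sequent-style: `Deriv Γ A` means that
`A` is derivable from the set of hypotheses `Γ`). -/
inductive Deriv : Set (Fm K) → Fm K → Prop
  | hyp : A ∈ Γ → Deriv Γ A
  | andI : Deriv Γ A → Deriv Γ B → Deriv Γ (.conj A B)
  | andE1 : Deriv Γ (.conj A B) → Deriv Γ A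
  | andE2 : Deriv Γ (.conj A B) → Deriv Γ B
  | orI1 : Deriv Γ A → Deriv Γ (.disj A B)
  | orI2 : Deriv Γ B → Deriv Γ (.disj A B)
  | orE : Deriv Γ (.disj A B) → Deriv (insert A Γ) C → Deriv (insert B Γ) C → Deriv Γ C
  | negAndI1 : Deriv Γ (.neg A) → Deriv Γ (.neg (.conj A B))
  | negAndI2 : Deriv Γ (.neg B) → Deriv Γ (.neg (.conj A B))
  | negAndE : Deriv Γ (.neg (.conj A B)) → Deriv (insert (.neg A) Γ) C →
      Deriv (insert (.neg B) Γ) C → Deriv Γ C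
  | negOrI : Deriv Γ (.neg A) → Deriv Γ (.neg B) → Deriv Γ (.neg (.disj A B))
  | negOrE1 : Deriv Γ (.neg (.disj A B)) → Deriv Γ (.neg A)
  | negOrE2 : Deriv Γ (.neg (.disj A B)) → Deriv Γ (.neg B)
  | dnI : Deriv Γ A → Deriv Γ (.neg (.neg A))
  | dnE : Deriv Γ (.neg (.neg A)) → Deriv Γ A
  | expO : Deriv Γ (.cl A) → Deriv Γ A → Deriv Γ (.neg A) → Deriv Γ B
  | pemO : Deriv Γ (.cl A) → Deriv Γ (.disj A (.neg A))
  | consR : Deriv Γ (.cl A) → Deriv Γ (.ncl A) → Deriv Γ B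
  | compR : Deriv Γ (.disj (.cl A) (.ncl A))
  | allI : Deriv Γ (.disj B (subst x (Sum.inr c) A)) → ¬ cOcc c A → ¬ cOcc c B →
      (∀ G ∈ Γ, ¬ cOcc c G) → Deriv Γ (.disj B (.all x A))
  | allE : Deriv Γ (.all x A) → Deriv Γ (subst x (Sum.inr c) A)
  | exI : Deriv Γ (subst x (Sum.inr c) A) → Deriv Γ (.ex x A)
  | exE : Deriv Γ (.ex x A) → Deriv (insert (subst x (Sum.inr c) A) Γ) C →
      ¬ cOcc c A → ¬ cOcc c C → (∀ G ∈ Γ, ¬ cOcc c G) → Deriv Γ C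
  | negAllI : Deriv Γ (.neg (subst x (Sum.inr c) A)) → Deriv Γ (.neg (.all x A))
  | negAllE : Deriv Γ (.neg (.all x A)) → Deriv (insert (.neg (subst x (Sum.inr c) A)) Γ) C →
      ¬ cOcc c A → ¬ cOcc c C → (∀ G ∈ Γ, ¬ cOcc c G) → Deriv Γ C
  | negExI : Deriv Γ (.neg (subst x (Sum.inr c) A)) → ¬ cOcc c A →
      (∀ G ∈ Γ, ¬ cOcc c G) → Deriv Γ (.neg (.ex x A))
  | negExE : Deriv Γ (.neg (.ex x A)) → Deriv Γ (.neg (subst x (Sum.inr c) A))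
  | eqI : Deriv Γ (.eq (Sum.inr c) (Sum.inr c))
  | eqE : Deriv Γ (.eq (Sum.inr c₁) (Sum.inr c₂)) → Deriv Γ (subst x (Sum.inr c₁) A) →
      Deriv Γ (subst x (Sum.inr c₂) A)
  | av : Deriv Γ A → Alpha A A' → Deriv Γ A'

/-- An S-structure: each constant denotes an element of the domain `D`, each
predicate letter gets an extension `Pplus` and an anti-extension `Pminus`;
the extension of identity is fixed as the diagonal, its anti-extension
`eqMinus` is arbitrary. -/
structure Struc (C D : Type) where
  cI : C → D
  Pplus : ℕ → List D → Prop
  Pminus : ℕ → List D → Prop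
  eqMinus : D → D → Prop

variable {C D : Type}

/-- Denotation of a constant of the diagram language (`C ⊕ D`): a diagram
constant `ā` (for `a : D`) denotes `a` itself. -/
def den (S : Struc C D) : C ⊕ D → D := Sum.elim S.cI id

/-- Clauses (1)-(7) and (10)-(13) of the valuation definition: the clauses
for atomic and negated atomic sentences, ∧, ∨, De Morgan negations,
double negation, and the substitutional quantifier clauses. -/
structure ValCore (S : Struc C D) (v : Fm (C ⊕ D) → Bool) : Prop where
  atom : ∀ (n : ℕ) (cs : List (C ⊕ D)),
    v (.pred n (cs.map Sum.inr)) = true ↔ S.Pplus n (cs.map (den S))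
  natom : ∀ (n : ℕ) (cs : List (C ⊕ D)),
    v (.neg (.pred n (cs.map Sum.inr))) = true ↔ S.Pminus n (cs.map (den S))
  eqP : ∀ a b : C ⊕ D, v (.eq (Sum.inr a) (Sum.inr b)) = true ↔ den S a = den S b
  eqN : ∀ a b : C ⊕ D, v (.neg (.eq (Sum.inr a) (Sum.inr b))) = true ↔
    S.eqMinus (den S a) (den S b)
  andC : ∀ A B, Closed A → Closed B →
    (v (.conj A B) = true ↔ v A = true ∧ v B = true)
  orC : ∀ A B, Closed A → Closed B →
    (v (.disj A B) = true ↔ v A = true ∨ v B = true)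
  nandC : ∀ A B, Closed A → Closed B →
    (v (.neg (.conj A B)) = true ↔ v (.neg A) = true ∨ v (.neg B) = true)
  norC : ∀ A B, Closed A → Closed B →
    (v (.neg (.disj A B)) = true ↔ v (.neg A) = true ∧ v (.neg B) = true)
  dnC : ∀ A, Closed A → v (.neg (.neg A)) = v A
  allC : ∀ (x : ℕ) (A : Fm (C ⊕ D)), fv A ⊆ {x} →
    (v (.all x A) = true ↔ ∀ d : D, v (subst x (Sum.inr (Sum.inr d)) A) = true)
  exC : ∀ (x : ℕ) (A : Fm (C ⊕ D)), fv A ⊆ {x} →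
    (v (.ex x A) = true ↔ ∃ d : D, v (subst x (Sum.inr (Sum.inr d)) A) = true)
  nallC : ∀ (x : ℕ) (A : Fm (C ⊕ D)), fv A ⊆ {x} →
    (v (.neg (.all x A)) = true ↔ ∃ d : D, v (.neg (subst x (Sum.inr (Sum.inr d)) A)) = true)
  nexC : ∀ (x : ℕ) (A : Fm (C ⊕ D)), fv A ⊆ {x} →
    (v (.neg (.ex x A)) = true ↔ ∀ d : D, v (.neg (subst x (Sum.inr (Sum.inr d)) A)) = true)

/-- An 𝔄-valuation for QLET_F: the determined clauses together with clauses
(8), (9), (14) (alphabetic variants) and (15). -/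
structure IsVal (S : Struc C D) (v : Fm (C ⊕ D) → Bool) extends ValCore S v : Prop where
  clC : ∀ A, Closed A → v (.cl A) = true → (v A = true ↔ v (.neg A) = false)
  compC : ∀ A, Closed A → (v (.cl A) = true ↔ v (.ncl A) = false)
  avC : ∀ A A', Closed A → Alpha A A' → v A = v A'
  substC : ∀ (x : ℕ) (A : Fm (C ⊕ D)), fv A ⊆ {x} → ∀ c₁ c₂ : C ⊕ D,
    den S c₁ = den S c₂ →
    v (subst x (Sum.inr c₁) A) = v (subst x (Sum.inr c₂) A) →
    (v (.neg (subst x (Sum.inr c₁) A)) = v (.neg (subst x (Sum.inr c₂) A)) ∧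
     v (.cl (subst x (Sum.inr c₁) A)) = v (.cl (subst x (Sum.inr c₂) A)) ∧
     v (.ncl (subst x (Sum.inr c₁) A)) = v (.ncl (subst x (Sum.inr c₂) A)))

/-- Map a formula along a renaming of its constants (used to embed the base
language into the diagram language). -/
def Fm.map (f : K → K') : Fm K → Fm K'
  | .pred n ts => .pred n (ts.map (Sum.map id f))
  | .eq a b    => .eq (Sum.map id f a) (Sum.map id f b)
  | .neg A     => .neg (Fm.map f A)
  | .conj A B  => .conj (Fm.map f A) (Fm.map f B)
  | .disj A B  => .disj (Fm.map f A) (Fm.map f B)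
  | .cl A      => .cl (Fm.map f A)
  | .ncl A     => .ncl (Fm.map f A)
  | .all y A   => .all y (Fm.map f A)
  | .ex y A    => .ex y (Fm.map f A)

/-- A sentence of the base language holds in the interpretation ⟨S, v⟩. -/
def Sat (S : Struc C D) (v : Fm (C ⊕ D) → Bool) (A : Fm C) : Prop :=
  v (A.map Sum.inl) = true

/-- Semantic consequence: every interpretation making all of Γ hold makes A hold. -/
def SemCons (Γ : Set (Fm C)) (A : Fm C) : Prop :=
  ∀ (D : Type) (S : Struc C D) (v : Fm (C ⊕ D) → Bool), Nonempty D → IsVal S v →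
    (∀ B ∈ Γ, Sat S v B) → Sat S v A

/-- Γ has a model. -/
def HasModel (Γ : Set (Fm C)) : Prop :=
  ∃ (D : Type) (S : Struc C D) (v : Fm (C ⊕ D) → Bool),
    Nonempty D ∧ IsVal S v ∧ ∀ B ∈ Γ, Sat S v B

/-- Henkin set: Δ proves an existential iff it proves some instance, and a
universal iff it proves every instance. -/
def Henkin (Δ : Set (Fm K)) : Prop :=
  ∀ (x : ℕ) (B : Fm K),
    (Deriv Δ (.ex x B) ↔ ∃ c : K, Deriv Δ (subst x (Sum.inr c) B)) ∧
    (Deriv Δ (.all x B) ↔ ∀ c : K, Deriv Δ (subst x (Sum.inr c) B))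

/-- Regular set: non-trivial, deductively closed, and disjunctive. -/
def Regular (Δ : Set (Fm K)) : Prop :=
  (∃ A, ¬ Deriv Δ A) ∧ (∀ A, Deriv Δ A → A ∈ Δ) ∧
  (∀ A B, Deriv Δ (.disj A B) → Deriv Δ A ∨ Deriv Δ B)

end QLETF

namespace S13A
open QLETF

variable {K K' : Type}

/-- Serialization of formulas, for cardinality computations. -/
def toL : Fm K → List (ℕ ⊕ (ℕ ⊕ K))
  | .pred n ts => .inl 0 :: .inl n :: .inl ts.length :: ts.map .inr
  | .eq a b => [.inl 1, .inr a, .inr b]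
  | .neg A => .inl 2 :: toL A
  | .conj A B => .inl 3 :: (toL A ++ toL B)
  | .disj A B => .inl 4 :: (toL A ++ toL B)
  | .cl A => .inl 5 :: toL A
  | .ncl A => .inl 6 :: toL A
  | .all x A => .inl 7 :: .inl x :: toL A
  | .ex x A => .inl 8 :: .inl x :: toL A

lemma toL_prefix : ∀ (A B : Fm K) (l l' : List (ℕ ⊕ (ℕ ⊕ K))),
    toL A ++ l = toL B ++ l' → A = B ∧ l = l' := by
  intro A
  induction A with
  | pred n ts =>
    intro B l l' h
    cases B <;> simp [toL] at h
    obtain ⟨h1, h2, h3⟩ := h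
    have := List.append_inj h3 (by simp [h2])
    rcases this with ⟨h4, h5⟩
    have := List.map_injective_iff.mpr (Sum.inr_injective) h4
    exact ⟨by rw [h1, this], h5⟩
  | eq a b =>
    intro B l l' h
    cases B <;> simp [toL] at h
    exact ⟨by rw [h.1, h.2.1], h.2.2⟩
  | neg A ih =>
    intro B l l' h
    cases B <;> simp [toL] at h
    obtain ⟨h1, h2⟩ := ih _ _ _ h
    exact ⟨by rw [h1], h2⟩
  | conj A₁ A₂ ih1 ih2 =>
    intro B l l' h
    cases B <;> simp [toL, List.append_assoc] at h
    obtain ⟨h1, h2⟩ := ih1 _ _ _ h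
    obtain ⟨h3, h4⟩ := ih2 _ _ _ h2
    exact ⟨by rw [h1, h3], h4⟩
  | disj A₁ A₂ ih1 ih2 =>
    intro B l l' h
    cases B <;> simp [toL, List.append_assoc] at h
    obtain ⟨h1, h2⟩ := ih1 _ _ _ h
    obtain ⟨h3, h4⟩ := ih2 _ _ _ h2
    exact ⟨by rw [h1, h3], h4⟩
  | cl A ih =>
    intro B l l' h
    cases B <;> simp [toL] at h
    obtain ⟨h1, h2⟩ := ih _ _ _ h
    exact ⟨by rw [h1], h2⟩
  | ncl A ih =>
    intro B l l' h
    cases B <;> simp [toL] at h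
    obtain ⟨h1, h2⟩ := ih _ _ _ h
    exact ⟨by rw [h1], h2⟩
  | all x A ih =>
    intro B l l' h
    cases B <;> simp [toL] at h
    obtain ⟨hx, h⟩ := h
    obtain ⟨h1, h2⟩ := ih _ _ _ h
    exact ⟨by rw [hx, h1], h2⟩
  | ex x A ih =>
    intro B l l' h
    cases B <;> simp [toL] at h
    obtain ⟨hx, h⟩ := h
    obtain ⟨h1, h2⟩ := ih _ _ _ h
    exact ⟨by rw [hx, h1], h2⟩

lemma mk_fm_le (K : Type) :
    Cardinal.mk (Fm K) ≤ max Cardinal.aleph0 (Cardinal.mk K) := by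
  have hinj : Function.Injective (toL (K := K)) := by
    intro A B h
    exact (toL_prefix A B [] [] (by simp [h])).1
  set M := max Cardinal.aleph0 (Cardinal.mk K) with hM
  have hMinf : Cardinal.aleph0 ≤ M := le_max_left _ _
  calc Cardinal.mk (Fm K) ≤ Cardinal.mk (List (ℕ ⊕ (ℕ ⊕ K))) :=
        Cardinal.mk_le_of_injective hinj
    _ ≤ max Cardinal.aleph0 (Cardinal.mk (ℕ ⊕ (ℕ ⊕ K))) := Cardinal.mk_list_le_max _
    _ ≤ M := by
        apply max_le hMinf
        have : Cardinal.mk (ℕ ⊕ (ℕ ⊕ K)) = Cardinal.aleph0 + (Cardinal.aleph0 + Cardinal.mk K) := by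
          simp [Cardinal.mk_sum]
        rw [this]
        calc Cardinal.aleph0 + (Cardinal.aleph0 + Cardinal.mk K) ≤ M + (M + M) := by
              gcongr
              · exact le_max_right _ _
            _ = M := by
              rw [Cardinal.add_eq_self hMinf, Cardinal.add_eq_self hMinf]

end S13A

namespace S13A
open QLETF
variable {K K' K'' : Type}

lemma sum_map_eq_inl {f : K → K'} {a : ℕ ⊕ K} {y : ℕ} :
    Sum.map id f a = Sum.inl y ↔ a = Sum.inl y := by
  cases a <;> simp

lemma fv_map (f : K → K') (A : Fm K) : fv (A.map f) = fv A := by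
  induction A with
  | pred n ts =>
    ext y
    simp only [Fm.map, fv, Set.mem_setOf_eq, List.mem_map]
    constructor
    · rintro ⟨a, ha, h⟩; cases a <;> simp_all
    · intro h; exact ⟨Sum.inl y, h, rfl⟩
  | eq a b => ext y; cases a <;> cases b <;> simp [Fm.map, fv]
  | neg A ih => simpa [Fm.map, fv] using ih
  | conj A B ih1 ih2 => simp [Fm.map, fv, ih1, ih2]
  | disj A B ih1 ih2 => simp [Fm.map, fv, ih1, ih2]
  | cl A ih => simpa [Fm.map, fv] using ih
  | ncl A ih => simpa [Fm.map, fv] using ih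
  | all x A ih => simp [Fm.map, fv, ih]
  | ex x A ih => simp [Fm.map, fv, ih]

lemma vars_map (f : K → K') (A : Fm K) : vars (A.map f) = vars A := by
  induction A with
  | pred n ts =>
    ext y
    simp only [Fm.map, vars, Set.mem_setOf_eq, List.mem_map]
    constructor
    · rintro ⟨a, ha, h⟩; cases a <;> simp_all
    · intro h; exact ⟨Sum.inl y, h, rfl⟩
  | eq a b => ext y; cases a <;> cases b <;> simp [Fm.map, vars]
  | neg A ih => simpa [Fm.map, vars] using ih
  | conj A B ih1 ih2 => simp [Fm.map, vars, ih1, ih2]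
  | disj A B ih1 ih2 => simp [Fm.map, vars, ih1, ih2]
  | cl A ih => simpa [Fm.map, vars] using ih
  | ncl A ih => simpa [Fm.map, vars] using ih
  | all x A ih => simp [Fm.map, vars, ih]
  | ex x A ih => simp [Fm.map, vars, ih]

lemma closed_map (f : K → K') (A : Fm K) : Closed (A.map f) ↔ Closed A := by
  simp [Closed, fv_map]

lemma substT_map (f : K → K') (x : ℕ) (t : ℕ ⊕ K) (a : ℕ ⊕ K) :
    substT x (Sum.map id f t) (Sum.map id f a) = Sum.map id f (substT x t a) := by
  cases a with
  | inl y =>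
    by_cases h : y = x
    · subst h; simp [substT]
    · simp [substT, h]
  | inr c => simp [substT]

lemma subst_map (f : K → K') (x : ℕ) (t : ℕ ⊕ K) (A : Fm K) :
    (subst x t A).map f = subst x (Sum.map id f t) (A.map f) := by
  induction A with
  | pred n ts =>
    simp only [Fm.map, subst, List.map_map]
    exact congrArg (Fm.pred n) (List.map_congr_left fun a _ => (substT_map f x t a).symm)
  | eq a b => simp [Fm.map, subst, substT_map]
  | neg A ih => simp [Fm.map, subst, ih]
  | conj A B ih1 ih2 => simp [Fm.map, subst, ih1, ih2]
  | disj A B ih1 ih2 => simp [Fm.map, subst, ih1, ih2]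
  | cl A ih => simp [Fm.map, subst, ih]
  | ncl A ih => simp [Fm.map, subst, ih]
  | all y A ih => simp only [subst]; split <;> simp_all [Fm.map, subst]
  | ex y A ih => simp only [subst]; split <;> simp_all [Fm.map, subst]

lemma map_map (f : K → K') (g : K' → K'') (A : Fm K) :
    (A.map f).map g = A.map (g ∘ f) := by
  induction A with
  | pred n ts =>
    simp only [Fm.map, List.map_map]
    exact congrArg (Fm.pred n) (List.map_congr_left fun a _ => by cases a <;> rfl)
  | eq a b => cases a <;> cases b <;> rfl
  | neg A ih => simp [Fm.map, ih]
  | conj A B ih1 ih2 => simp [Fm.map, ih1, ih2]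
  | disj A B ih1 ih2 => simp [Fm.map, ih1, ih2]
  | cl A ih => simp [Fm.map, ih]
  | ncl A ih => simp [Fm.map, ih]
  | all x A ih => simp [Fm.map, ih]
  | ex x A ih => simp [Fm.map, ih]

lemma alpha_map (f : K → K') {A B : Fm K} (h : Alpha A B) :
    Alpha (A.map f) (B.map f) := by
  induction h with
  | refl A => exact .refl _
  | symm _ ih => exact .symm ih
  | trans _ _ ih1 ih2 => exact .trans ih1 ih2
  | negC _ ih => exact .negC ih
  | conjC _ _ ih1 ih2 => exact .conjC ih1 ih2
  | disjC _ _ ih1 ih2 => exact .disjC ih1 ih2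
  | clC _ ih => exact .clC ih
  | nclC _ ih => exact .nclC ih
  | allC _ ih => exact .allC ih
  | exC _ ih => exact .exC ih
  | allR x y A hy =>
    have := Alpha.allR (K := K') x y (A.map f) (by rwa [vars_map])
    simpa [Fm.map, subst_map] using this
  | exR x y A hy =>
    have := Alpha.exR (K := K') x y (A.map f) (by rwa [vars_map])
    simpa [Fm.map, subst_map] using this

end S13A

namespace S13A
open QLETF

section Hull
variable {C D : Type} (S : Struc C D) (v : Fm (C ⊕ D) → Bool) (d₀ : D)

/-- The witness property: substituting `d` (negated if `b₂`) gives value `b₁`. -/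
def P (x : ℕ) (A : Fm (C ⊕ D)) (b₁ b₂ : Bool) (d : D) : Prop :=
  (if b₂ then v (.neg (subst x (Sum.inr (Sum.inr d)) A)) else
    v (subst x (Sum.inr (Sum.inr d)) A)) = b₁

open Classical in
noncomputable def wit (x : ℕ) (A : Fm (C ⊕ D)) (b₁ b₂ : Bool) : D :=
  if h : ∃ d, P v x A b₁ b₂ d then h.choose else d₀

lemma wit_spec {x : ℕ} {A : Fm (C ⊕ D)} {b₁ b₂ : Bool}
    (h : ∃ d, P v x A b₁ b₂ d) : P v x A b₁ b₂ (wit v d₀ x A b₁ b₂) := by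
  classical
  rw [wit, dif_pos h]; exact h.choose_spec

/-- Embedding of formulas over a subdomain into formulas over `D`. -/
def emb (s : Set D) : Fm (C ⊕ ↥s) → Fm (C ⊕ D) :=
  Fm.map (Sum.map id Subtype.val)

lemma emb_lift {s t : Set D} (h : s ⊆ t) (A : Fm (C ⊕ ↥s)) :
    emb (C := C) t (A.map (Sum.map id (Set.inclusion h))) = emb s A := by
  rw [emb, emb, map_map]
  congr 1
  funext c
  rcases c with c | d <;> rfl

def step (s : Set D) : Set D :=
  s ∪ Set.range (fun p : ℕ × Fm (C ⊕ ↥s) × Bool × Bool =>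
    wit v d₀ p.1 (emb s p.2.1) p.2.2.1 p.2.2.2)

def DSeq : ℕ → Set D
  | 0 => Set.range S.cI ∪ {d₀}
  | n+1 => step v d₀ (DSeq n)

lemma DSeq_mono : Monotone (DSeq S v d₀) := by
  apply monotone_nat_of_le_succ
  intro n
  exact Set.subset_union_left

def Hull : Set D := ⋃ n, DSeq S v d₀ n

lemma DSeq_subset_Hull (n : ℕ) : DSeq S v d₀ n ⊆ Hull S v d₀ :=
  Set.subset_iUnion (DSeq S v d₀) n

/-- Every term over the hull comes from some finite stage. -/
lemma term_stage (a : ℕ ⊕ (C ⊕ ↥(Hull S v d₀))) :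
    ∃ (n : ℕ) (a' : ℕ ⊕ (C ⊕ ↥(DSeq S v d₀ n))),
      Sum.map id (Sum.map id Subtype.val) a' = Sum.map id (Sum.map id Subtype.val) a := by
  rcases a with y | c
  · exact ⟨0, Sum.inl y, rfl⟩
  rcases c with c | d
  · exact ⟨0, Sum.inr (Sum.inl c), rfl⟩
  · obtain ⟨n, hn⟩ := Set.mem_iUnion.mp d.2
    exact ⟨n, Sum.inr (Sum.inr ⟨d.1, hn⟩), rfl⟩

lemma term_lift {m n : ℕ} (h : m ≤ n) (a : ℕ ⊕ (C ⊕ ↥(DSeq S v d₀ m))) :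
    Sum.map id (Sum.map id Subtype.val)
      (Sum.map id (Sum.map id (Set.inclusion (DSeq_mono S v d₀ h))) a)
      = Sum.map id (Sum.map id (Subtype.val)) a := by
  rcases a with y | c
  · rfl
  rcases c with c | d <;> rfl

/-- Every list of terms over the hull comes from some finite stage. -/
lemma list_stage (ts : List (ℕ ⊕ (C ⊕ ↥(Hull S v d₀)))) :
    ∃ (n : ℕ) (ts' : List (ℕ ⊕ (C ⊕ ↥(DSeq S v d₀ n)))),
      ts'.map (Sum.map id (Sum.map id Subtype.val)) =
      ts.map (Sum.map id (Sum.map id Subtype.val)) := by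
  induction ts with
  | nil => exact ⟨0, [], rfl⟩
  | cons a ts ih =>
    obtain ⟨n, ts', hts⟩ := ih
    obtain ⟨m, a', ha⟩ := term_stage S v d₀ a
    refine ⟨max n m,
      Sum.map id (Sum.map id (Set.inclusion (DSeq_mono S v d₀ (le_max_right n m)))) a' ::
        ts'.map (Sum.map id (Sum.map id (Set.inclusion (DSeq_mono S v d₀ (le_max_left n m))))), ?_⟩
    simp only [List.map_cons, List.map_map]
    congr 1
    · rw [term_lift S v d₀ (le_max_right n m) a']; exact ha
    · rw [← hts]
      exact List.map_congr_left fun a _ => term_lift S v d₀ (le_max_left n m) a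

/-- Every formula over the hull comes from some finite stage. -/
lemma fm_stage (A : Fm (C ⊕ ↥(Hull S v d₀))) :
    ∃ (n : ℕ) (A' : Fm (C ⊕ ↥(DSeq S v d₀ n))),
      emb (DSeq S v d₀ n) A' = emb (Hull S v d₀) A := by
  induction A with
  | pred k ts =>
    obtain ⟨n, ts', h⟩ := list_stage S v d₀ ts
    exact ⟨n, .pred k ts', congrArg (Fm.pred k) h⟩
  | eq a b =>
    obtain ⟨n, a', ha⟩ := term_stage S v d₀ a
    obtain ⟨m, b', hb⟩ := term_stage S v d₀ b
    refine ⟨max n m,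
      .eq (Sum.map id (Sum.map id (Set.inclusion (DSeq_mono S v d₀ (le_max_left n m)))) a')
          (Sum.map id (Sum.map id (Set.inclusion (DSeq_mono S v d₀ (le_max_right n m)))) b'), ?_⟩
    show Fm.eq _ _ = Fm.eq _ _
    rw [term_lift S v d₀ (le_max_left n m) a', term_lift S v d₀ (le_max_right n m) b', ha, hb]
  | neg A ih =>
    obtain ⟨n, A', h⟩ := ih
    exact ⟨n, .neg A', congrArg Fm.neg h⟩
  | conj A B ihA ihB =>
    obtain ⟨n, A', hA⟩ := ihA
    obtain ⟨m, B', hB⟩ := ihB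
    refine ⟨max n m,
      .conj (A'.map (Sum.map id (Set.inclusion (DSeq_mono S v d₀ (le_max_left n m)))))
            (B'.map (Sum.map id (Set.inclusion (DSeq_mono S v d₀ (le_max_right n m))))), ?_⟩
    exact congrArg₂ Fm.conj
      ((emb_lift (DSeq_mono S v d₀ (le_max_left n m)) A').trans hA)
      ((emb_lift (DSeq_mono S v d₀ (le_max_right n m)) B').trans hB)
  | disj A B ihA ihB =>
    obtain ⟨n, A', hA⟩ := ihA
    obtain ⟨m, B', hB⟩ := ihB
    refine ⟨max n m,
      .disj (A'.map (Sum.map id (Set.inclusion (DSeq_mono S v d₀ (le_max_left n m)))))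
            (B'.map (Sum.map id (Set.inclusion (DSeq_mono S v d₀ (le_max_right n m))))), ?_⟩
    exact congrArg₂ Fm.disj
      ((emb_lift (DSeq_mono S v d₀ (le_max_left n m)) A').trans hA)
      ((emb_lift (DSeq_mono S v d₀ (le_max_right n m)) B').trans hB)
  | cl A ih =>
    obtain ⟨n, A', h⟩ := ih
    exact ⟨n, .cl A', congrArg Fm.cl h⟩
  | ncl A ih =>
    obtain ⟨n, A', h⟩ := ih
    exact ⟨n, .ncl A', congrArg Fm.ncl h⟩
  | all x A ih =>
    obtain ⟨n, A', h⟩ := ih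
    exact ⟨n, .all x A', congrArg (Fm.all x) h⟩
  | ex x A ih =>
    obtain ⟨n, A', h⟩ := ih
    exact ⟨n, .ex x A', congrArg (Fm.ex x) h⟩

/-- The key closure property of the hull: witnesses can be found inside. -/
lemma hull_wit (x : ℕ) (A : Fm (C ⊕ ↥(Hull S v d₀))) (b₁ b₂ : Bool)
    (h : ∃ d : D, P v x (emb (Hull S v d₀) A) b₁ b₂ d) :
    ∃ d' : ↥(Hull S v d₀), P v x (emb (Hull S v d₀) A) b₁ b₂ d'.val := by
  obtain ⟨n, A', hA⟩ := fm_stage S v d₀ A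
  set d : D := wit v d₀ x (emb (DSeq S v d₀ n) A') b₁ b₂ with hd
  have hw : d ∈ DSeq S v d₀ (n + 1) := Set.mem_union_right _ ⟨⟨x, A', b₁, b₂⟩, rfl⟩
  refine ⟨⟨d, DSeq_subset_Hull S v d₀ (n+1) hw⟩, ?_⟩
  have hs : ∃ e, P v x (emb (DSeq S v d₀ n) A') b₁ b₂ e := by rwa [hA]
  have h2 : P v x (emb (DSeq S v d₀ n) A') b₁ b₂ d := wit_spec v d₀ hs
  rw [hA] at h2
  exact h2
end Hull

end S13A

namespace S13A
open QLETF

section Model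
variable {C D : Type} (S : Struc C D) (v : Fm (C ⊕ D) → Bool) (d₀ : D)

/-- The structure induced on the hull. -/
def SH : Struc C ↥(Hull S v d₀) where
  cI c := ⟨S.cI c, DSeq_subset_Hull S v d₀ 0 (Set.mem_union_left _ ⟨c, rfl⟩)⟩
  Pplus n l := S.Pplus n (l.map Subtype.val)
  Pminus n l := S.Pminus n (l.map Subtype.val)
  eqMinus a b := S.eqMinus a.val b.val

/-- The valuation induced on the hull. -/
def vH : Fm (C ⊕ ↥(Hull S v d₀)) → Bool := fun A => v (emb _ A)

lemma den_SH (c : C ⊕ ↥(Hull S v d₀)) :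
    den S (Sum.map id Subtype.val c) = (den (SH S v d₀) c).val := by
  rcases c with c | d <;> rfl

lemma emb_subst (x : ℕ) (c : C ⊕ ↥(Hull S v d₀)) (A : Fm (C ⊕ ↥(Hull S v d₀))) :
    emb (Hull S v d₀) (subst x (Sum.inr c) A) =
    subst x (Sum.inr (Sum.map id Subtype.val c)) (emb _ A) := by
  show Fm.map (Sum.map id Subtype.val) (subst x (Sum.inr c) A) = _
  rw [subst_map]
  rfl

lemma vH_subst (x : ℕ) (c : C ⊕ ↥(Hull S v d₀)) (A : Fm (C ⊕ ↥(Hull S v d₀))) :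
    vH S v d₀ (subst x (Sum.inr c) A) =
    v (subst x (Sum.inr (Sum.map id Subtype.val c)) (emb _ A)) := by
  show v _ = _
  rw [emb_subst]

lemma vH_substD (x : ℕ) (A : Fm (C ⊕ ↥(Hull S v d₀))) (d' : ↥(Hull S v d₀)) :
    vH S v d₀ (subst x (Sum.inr (Sum.inr d')) A) =
    v (subst x (Sum.inr (Sum.inr d'.val)) (emb _ A)) :=
  vH_subst S v d₀ x (Sum.inr d') A

lemma vH_substD_neg (x : ℕ) (A : Fm (C ⊕ ↥(Hull S v d₀))) (d' : ↥(Hull S v d₀)) :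
    vH S v d₀ (.neg (subst x (Sum.inr (Sum.inr d')) A)) =
    v (.neg (subst x (Sum.inr (Sum.inr d'.val)) (emb _ A))) := by
  show v (.neg (emb _ _)) = _
  rw [emb_subst]
  rfl

lemma fv_emb (A : Fm (C ⊕ ↥(Hull S v d₀))) : fv (emb (Hull S v d₀) A) = fv A := by
  rw [emb, fv_map]

lemma inr_comm (cs : List (C ⊕ ↥(Hull S v d₀))) :
    (cs.map (Sum.inr : _ → ℕ ⊕ (C ⊕ ↥(Hull S v d₀)))).map
        (Sum.map id (Sum.map id Subtype.val)) =
    (cs.map (Sum.map id Subtype.val)).map (Sum.inr : _ → ℕ ⊕ (C ⊕ D)) := by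
  rw [List.map_map, List.map_map]
  exact List.map_congr_left fun a _ => rfl

lemma isVal_SH (hv : IsVal S v) : IsVal (SH S v d₀) (vH S v d₀) := by
  refine { atom := ?_, natom := ?_, eqP := ?_, eqN := ?_, andC := ?_, orC := ?_,
           nandC := ?_, norC := ?_, dnC := ?_, allC := ?_, exC := ?_, nallC := ?_,
           nexC := ?_, clC := ?_, compC := ?_, avC := ?_, substC := ?_ }
  -- atom
  · intro n cs
    have h1 : vH S v d₀ (.pred n (cs.map Sum.inr)) =
        v (.pred n ((cs.map (Sum.map id Subtype.val)).map Sum.inr)) := by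
      show v (Fm.pred n ((cs.map Sum.inr).map (Sum.map id (Sum.map id Subtype.val)))) = _
      rw [inr_comm]
    have h2 : (cs.map (Sum.map id Subtype.val)).map (den S) =
        (cs.map (den (SH S v d₀))).map Subtype.val := by
      rw [List.map_map, List.map_map]
      exact List.map_congr_left fun c _ => den_SH S v d₀ c
    rw [h1, hv.atom n (cs.map (Sum.map id Subtype.val))]
    show S.Pplus _ _ ↔ S.Pplus _ _
    rw [h2]
  -- natom
  · intro n cs
    have h1 : vH S v d₀ (.neg (.pred n (cs.map Sum.inr))) =
        v (.neg (.pred n ((cs.map (Sum.map id Subtype.val)).map Sum.inr))) := by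
      show v (.neg (Fm.pred n ((cs.map Sum.inr).map (Sum.map id (Sum.map id Subtype.val))))) = _
      rw [inr_comm]
    have h2 : (cs.map (Sum.map id Subtype.val)).map (den S) =
        (cs.map (den (SH S v d₀))).map Subtype.val := by
      rw [List.map_map, List.map_map]
      exact List.map_congr_left fun c _ => den_SH S v d₀ c
    rw [h1, hv.natom n (cs.map (Sum.map id Subtype.val))]
    show S.Pminus _ _ ↔ S.Pminus _ _
    rw [h2]
  -- eqP
  · intro a b
    show v (.eq (Sum.inr (Sum.map id Subtype.val a)) (Sum.inr (Sum.map id Subtype.val b)))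
        = true ↔ _
    rw [hv.eqP, den_SH, den_SH]
    exact Subtype.val_inj
  -- eqN
  · intro a b
    show v (.neg (.eq (Sum.inr (Sum.map id Subtype.val a))
        (Sum.inr (Sum.map id Subtype.val b)))) = true ↔ _
    rw [hv.eqN, den_SH, den_SH]
    exact Iff.rfl
  -- andC
  · intro A B hA hB
    exact hv.andC (emb _ A) (emb _ B) ((closed_map _ _).mpr hA) ((closed_map _ _).mpr hB)
  -- orC
  · intro A B hA hB
    exact hv.orC (emb _ A) (emb _ B) ((closed_map _ _).mpr hA) ((closed_map _ _).mpr hB)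
  -- nandC
  · intro A B hA hB
    exact hv.nandC (emb _ A) (emb _ B) ((closed_map _ _).mpr hA) ((closed_map _ _).mpr hB)
  -- norC
  · intro A B hA hB
    exact hv.norC (emb _ A) (emb _ B) ((closed_map _ _).mpr hA) ((closed_map _ _).mpr hB)
  -- dnC
  · intro A hA
    exact hv.dnC (emb _ A) ((closed_map _ _).mpr hA)
  -- allC
  · intro x A hfv
    have hfv' : fv (emb (Hull S v d₀) A) ⊆ {x} := by rw [fv_emb]; exact hfv
    show v (.all x (emb _ A)) = true ↔ _
    rw [hv.allC x _ hfv']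
    constructor
    · intro h d'
      rw [vH_substD]; exact h d'.val
    · intro h d
      by_contra hc
      have hex : ∃ e, P v x (emb (Hull S v d₀) A) false false e :=
        ⟨d, by simp only [P, if_neg Bool.false_ne_true]; simpa using hc⟩
      obtain ⟨d', hd'⟩ := hull_wit S v d₀ x A false false hex
      have h2 := h d'
      rw [vH_substD] at h2
      simp only [P] at hd'
      simp only [if_neg Bool.false_ne_true] at hd'
      rw [h2] at hd'
      cases hd'
  -- exC
  · intro x A hfv
    have hfv' : fv (emb (Hull S v d₀) A) ⊆ {x} := by rw [fv_emb]; exact hfv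
    show v (.ex x (emb _ A)) = true ↔ _
    rw [hv.exC x _ hfv']
    constructor
    · rintro ⟨d, hd⟩
      have hex : ∃ e, P v x (emb (Hull S v d₀) A) true false e :=
        ⟨d, by simp only [P, if_neg Bool.false_ne_true]; exact hd⟩
      obtain ⟨d', hd'⟩ := hull_wit S v d₀ x A true false hex
      refine ⟨d', ?_⟩
      rw [vH_substD]
      simpa only [P, if_neg Bool.false_ne_true] using hd'
    · rintro ⟨d', hd'⟩
      rw [vH_substD] at hd'
      exact ⟨d'.val, hd'⟩
  -- nallC
  · intro x A hfv
    have hfv' : fv (emb (Hull S v d₀) A) ⊆ {x} := by rw [fv_emb]; exact hfv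
    show v (.neg (.all x (emb _ A))) = true ↔ _
    rw [hv.nallC x _ hfv']
    constructor
    · rintro ⟨d, hd⟩
      have hex : ∃ e, P v x (emb (Hull S v d₀) A) true true e :=
        ⟨d, by simp only [P, if_pos rfl]; exact hd⟩
      obtain ⟨d', hd'⟩ := hull_wit S v d₀ x A true true hex
      refine ⟨d', ?_⟩
      rw [vH_substD_neg]
      simpa only [P, if_pos rfl, ↓reduceIte] using hd'
    · rintro ⟨d', hd'⟩
      rw [vH_substD_neg] at hd'
      exact ⟨d'.val, hd'⟩
  -- nexC
  · intro x A hfv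
    have hfv' : fv (emb (Hull S v d₀) A) ⊆ {x} := by rw [fv_emb]; exact hfv
    show v (.neg (.ex x (emb _ A))) = true ↔ _
    rw [hv.nexC x _ hfv']
    constructor
    · intro h d'
      rw [vH_substD_neg]; exact h d'.val
    · intro h d
      by_contra hc
      have hex : ∃ e, P v x (emb (Hull S v d₀) A) false true e :=
        ⟨d, by simp only [P, if_pos rfl]; simpa using hc⟩
      obtain ⟨d', hd'⟩ := hull_wit S v d₀ x A false true hex
      have h2 := h d'
      rw [vH_substD_neg] at h2
      simp only [P, if_pos rfl] at hd'
      rw [h2] at hd'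
      cases hd'
  -- clC
  · intro A hA h
    exact hv.clC (emb _ A) ((closed_map _ _).mpr hA) h
  -- compC
  · intro A hA
    exact hv.compC (emb _ A) ((closed_map _ _).mpr hA)
  -- avC
  · intro A A' hA halpha
    exact hv.avC (emb _ A) (emb _ A') ((closed_map _ _).mpr hA) (alpha_map _ halpha)
  -- substC
  · intro x A hfv c₁ c₂ hden heq
    have hfv' : fv (emb (Hull S v d₀) A) ⊆ {x} := by rw [fv_emb]; exact hfv
    have hden' : den S (Sum.map id Subtype.val c₁) = den S (Sum.map id Subtype.val c₂) := by
      rw [den_SH, den_SH, hden]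
    have heq' : v (subst x (Sum.inr (Sum.map id Subtype.val c₁)) (emb (Hull S v d₀) A)) =
        v (subst x (Sum.inr (Sum.map id Subtype.val c₂)) (emb (Hull S v d₀) A)) := by
      rw [← vH_subst S v d₀ x c₁ A, ← vH_subst S v d₀ x c₂ A]; exact heq
    obtain ⟨h1, h2, h3⟩ := hv.substC x (emb (Hull S v d₀) A) hfv' _ _ hden' heq'
    refine ⟨?_, ?_, ?_⟩
    · show v (.neg (emb _ _)) = v (.neg (emb _ _))
      rw [emb_subst, emb_subst]; exact h1
    · show v (.cl (emb _ _)) = v (.cl (emb _ _))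
      rw [emb_subst, emb_subst]; exact h2
    · show v (.ncl (emb _ _)) = v (.ncl (emb _ _))
      rw [emb_subst, emb_subst]; exact h3

lemma sat_SH (B : Fm C) (hB : Sat S v B) : Sat (SH S v d₀) (vH S v d₀) B := by
  show v (emb _ (B.map Sum.inl)) = true
  rw [emb, map_map]
  have : (Sum.map id (Subtype.val) ∘ (Sum.inl : C → C ⊕ ↥(Hull S v d₀)) : C → C ⊕ D)
      = Sum.inl := rfl
  rw [this]
  exact hB

end Model

end S13A

namespace S13A
open QLETF

lemma card_add_le {a b c : Cardinal} (hc : Cardinal.aleph0 ≤ c) (ha : a ≤ c) (hb : b ≤ c) :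
    a + b ≤ c :=
  le_trans (add_le_add ha hb) (le_of_eq (Cardinal.add_eq_self hc))

lemma card_mul_le {a b c : Cardinal} (hc : Cardinal.aleph0 ≤ c) (ha : a ≤ c) (hb : b ≤ c) :
    a * b ≤ c :=
  le_trans (mul_le_mul' ha hb) (le_of_eq (Cardinal.mul_eq_self hc))

lemma mk_DSeq_le {C D : Type} [Infinite C] (S : Struc C D) (v : Fm (C ⊕ D) → Bool)
    (d₀ : D) (n : ℕ) : Cardinal.mk ↥(DSeq S v d₀ n) ≤ Cardinal.mk C := by
  have hC : Cardinal.aleph0 ≤ Cardinal.mk C := Cardinal.aleph0_le_mk C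
  induction n with
  | zero =>
    refine le_trans (Cardinal.mk_union_le _ _) (card_add_le hC (Cardinal.mk_range_le) ?_)
    simpa using Cardinal.one_le_aleph0.trans hC
  | succ n ih =>
    refine le_trans (Cardinal.mk_union_le _ _) (card_add_le hC ih ?_)
    refine le_trans (Cardinal.mk_range_le) ?_
    have h1 : Cardinal.mk (Fm (C ⊕ ↥(DSeq S v d₀ n))) ≤ Cardinal.mk C := by
      refine le_trans (mk_fm_le _) (max_le hC ?_)
      rw [Cardinal.mk_sum]
      simpa using card_add_le hC le_rfl ih
    have h2 : Cardinal.mk (Fm (C ⊕ ↥(DSeq S v d₀ n)) × Bool × Bool) ≤ Cardinal.mk C := by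
      rw [Cardinal.mk_prod, Cardinal.mk_prod]
      simp only [Cardinal.lift_id]
      refine card_mul_le hC h1 (card_mul_le hC ?_ ?_) <;>
        simpa using (Cardinal.nat_lt_aleph0 2).le.trans hC
    rw [Cardinal.mk_prod]
    simp only [Cardinal.lift_id]
    exact card_mul_le hC (by simpa using hC) h2

lemma mk_Hull_le {C D : Type} [Infinite C] (S : Struc C D) (v : Fm (C ⊕ D) → Bool)
    (d₀ : D) : Cardinal.mk ↥(Hull S v d₀) ≤ Cardinal.mk C := by
  have hC : Cardinal.aleph0 ≤ Cardinal.mk C := Cardinal.aleph0_le_mk C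
  refine le_trans (Cardinal.mk_iUnion_le _) ?_
  refine card_mul_le hC (by simpa using hC) ?_
  exact ciSup_le' fun n => mk_DSeq_le S v d₀ n

end S13A



namespace S13
open QLETF

/-- Downward Löwenheim–Skolem for QLET_F: a satisfiable set of sentences over a
signature of cardinality λ (the signature has infinitely many constants and
countably many predicate letters, so λ = #C) has a model of cardinality ≤ λ. -/
theorem downward_lowenheim_skolem {C : Type} [Infinite C]
    (Γ : Set (Fm C)) (hΓ : ∀ B ∈ Γ, Closed B) (h : HasModel Γ) :
    ∃ (D : Type) (S : Struc C D) (v : Fm (C ⊕ D) → Bool),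
      Nonempty D ∧ IsVal S v ∧ (∀ B ∈ Γ, Sat S v B) ∧
      Cardinal.mk D ≤ Cardinal.mk C := by
  obtain ⟨D, S, v, ⟨d₀⟩, hv, hsat⟩ := h
  refine ⟨↥(S13A.Hull S v d₀), S13A.SH S v d₀, S13A.vH S v d₀, ?_,
    S13A.isVal_SH S v d₀ hv, ?_, S13A.mk_Hull_le S v d₀⟩
  · exact ⟨⟨d₀, S13A.DSeq_subset_Hull S v d₀ 0 (Set.mem_union_right _ rfl)⟩⟩
  · exact fun B hB => S13A.sat_SH S v d₀ B (hsat B hB)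

end S13
end

section
/- The rule ∀I' (from A(c/x) with c fresh infer ∀xA) together with the standard positive and negated quantifier rules does not suffice to derive ∀x(B ∨ A) ⊢ B ∨ ∀xA (x not free in B): there is a cut-free sequent calculus for the constructive first-order FDE (the →-free fragment of López-Escobar's refutability calculus) in which every formula in a cut-free derivation is a generalized subformula of the endsequent, and no cut-free proof of ∀x(B ∨ A) ⇒ B ∨ ∀xA exists. -/
set_option autoImplicit true
set_option relaxedAutoImplicit true

namespace FDE
open QLETF

/-- The natural deduction system QFDE, optionally extended by PEM (giving QLP),
by EXP (giving QK3), or by both (giving QCL).  `FDeriv pem exp Γ A` is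
derivability of `A` from `Γ` in the corresponding system. -/
inductive FDeriv {K : Type} (pem exp : Prop) : Set (Fm K) → Fm K → Prop
  | hyp : A ∈ Γ → FDeriv pem exp Γ A
  | andI : FDeriv pem exp Γ A → FDeriv pem exp Γ B → FDeriv pem exp Γ (.conj A B)
  | andE1 : FDeriv pem exp Γ (.conj A B) → FDeriv pem exp Γ A
  | andE2 : FDeriv pem exp Γ (.conj A B) → FDeriv pem exp Γ B
  | orI1 : FDeriv pem exp Γ A → FDeriv pem exp Γ (.disj A B)
  | orI2 : FDeriv pem exp Γ B → FDeriv pem exp Γ (.disj A B)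
  | orE : FDeriv pem exp Γ (.disj A B) → FDeriv pem exp (insert A Γ) C →
      FDeriv pem exp (insert B Γ) C → FDeriv pem exp Γ C
  | negAndI1 : FDeriv pem exp Γ (.neg A) → FDeriv pem exp Γ (.neg (.conj A B))
  | negAndI2 : FDeriv pem exp Γ (.neg B) → FDeriv pem exp Γ (.neg (.conj A B))
  | negAndE : FDeriv pem exp Γ (.neg (.conj A B)) → FDeriv pem exp (insert (.neg A) Γ) C →
      FDeriv pem exp (insert (.neg B) Γ) C → FDeriv pem exp Γ C
  | negOrI : FDeriv pem exp Γ (.neg A) → FDeriv pem exp Γ (.neg B) →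
      FDeriv pem exp Γ (.neg (.disj A B))
  | negOrE1 : FDeriv pem exp Γ (.neg (.disj A B)) → FDeriv pem exp Γ (.neg A)
  | negOrE2 : FDeriv pem exp Γ (.neg (.disj A B)) → FDeriv pem exp Γ (.neg B)
  | dnI : FDeriv pem exp Γ A → FDeriv pem exp Γ (.neg (.neg A))
  | dnE : FDeriv pem exp Γ (.neg (.neg A)) → FDeriv pem exp Γ A
  | allI : FDeriv pem exp Γ (.disj B (subst x (Sum.inr c) A)) → ¬ cOcc c A → ¬ cOcc c B →
      (∀ G ∈ Γ, ¬ cOcc c G) → FDeriv pem exp Γ (.disj B (.all x A))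
  | allE : FDeriv pem exp Γ (.all x A) → FDeriv pem exp Γ (subst x (Sum.inr c) A)
  | exI : FDeriv pem exp Γ (subst x (Sum.inr c) A) → FDeriv pem exp Γ (.ex x A)
  | exE : FDeriv pem exp Γ (.ex x A) → FDeriv pem exp (insert (subst x (Sum.inr c) A) Γ) C →
      ¬ cOcc c A → ¬ cOcc c C → (∀ G ∈ Γ, ¬ cOcc c G) → FDeriv pem exp Γ C
  | negAllI : FDeriv pem exp Γ (.neg (subst x (Sum.inr c) A)) →
      FDeriv pem exp Γ (.neg (.all x A))
  | negAllE : FDeriv pem exp Γ (.neg (.all x A)) →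
      FDeriv pem exp (insert (.neg (subst x (Sum.inr c) A)) Γ) C →
      ¬ cOcc c A → ¬ cOcc c C → (∀ G ∈ Γ, ¬ cOcc c G) → FDeriv pem exp Γ C
  | negExI : FDeriv pem exp Γ (.neg (subst x (Sum.inr c) A)) → ¬ cOcc c A →
      (∀ G ∈ Γ, ¬ cOcc c G) → FDeriv pem exp Γ (.neg (.ex x A))
  | negExE : FDeriv pem exp Γ (.neg (.ex x A)) → FDeriv pem exp Γ (.neg (subst x (Sum.inr c) A))
  | eqI : FDeriv pem exp Γ (.eq (Sum.inr c) (Sum.inr c))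
  | eqE : FDeriv pem exp Γ (.eq (Sum.inr c₁) (Sum.inr c₂)) →
      FDeriv pem exp Γ (subst x (Sum.inr c₁) A) → FDeriv pem exp Γ (subst x (Sum.inr c₂) A)
  | pemR : pem → FDeriv pem exp Γ (.disj A (.neg A))
  | expR : exp → FDeriv pem exp Γ A → FDeriv pem exp Γ (.neg A) → FDeriv pem exp Γ B

/-- QLP-structures: extension and anti-extension of every predicate letter
(including identity) jointly cover the appropriate power of the domain. -/
def CoverS {C D : Type} (S : Struc C D) : Prop :=
  (∀ (n : ℕ) (ds : List D), S.Pplus n ds ∨ S.Pminus n ds) ∧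
  (∀ a b : D, a = b ∨ S.eqMinus a b)

/-- QK3-structures: extension and anti-extension of every predicate letter
(including identity) are disjoint. -/
def DisjS {C D : Type} (S : Struc C D) : Prop :=
  (∀ (n : ℕ) (ds : List D), ¬ (S.Pplus n ds ∧ S.Pminus n ds)) ∧
  (∀ a : D, ¬ S.eqMinus a a)

/-- Semantic consequence over the class of structures satisfying `cond`,
with the induced (determined) QFDE valuations. -/
def SemConsF {C : Type} (cond : ∀ D : Type, Struc C D → Prop)
    (Γ : Set (Fm C)) (A : Fm C) : Prop :=
  ∀ (D : Type) (S : Struc C D) (v : Fm (C ⊕ D) → Bool), Nonempty D → cond D S →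
    ValCore S v → (∀ B ∈ Γ, Sat S v B) → Sat S v A

end FDE

namespace S17
open QLETF FDE

/-- QFDE′: quantified FDE whose universal introduction rule is the usual
∀I′ (from `A(c/x)`, `c` fresh, infer `∀xA`) instead of the restricted
disjunctive rule ∀I. -/
inductive FDerivP {K : Type} : Set (Fm K) → Fm K → Prop
  | hyp : A ∈ Γ → FDerivP Γ A
  | andI : FDerivP Γ A → FDerivP Γ B → FDerivP Γ (.conj A B)
  | andE1 : FDerivP Γ (.conj A B) → FDerivP Γ A
  | andE2 : FDerivP Γ (.conj A B) → FDerivP Γ B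
  | orI1 : FDerivP Γ A → FDerivP Γ (.disj A B)
  | orI2 : FDerivP Γ B → FDerivP Γ (.disj A B)
  | orE : FDerivP Γ (.disj A B) → FDerivP (insert A Γ) C → FDerivP (insert B Γ) C → FDerivP Γ C
  | negAndI1 : FDerivP Γ (.neg A) → FDerivP Γ (.neg (.conj A B))
  | negAndI2 : FDerivP Γ (.neg B) → FDerivP Γ (.neg (.conj A B))
  | negAndE : FDerivP Γ (.neg (.conj A B)) → FDerivP (insert (.neg A) Γ) C →
      FDerivP (insert (.neg B) Γ) C → FDerivP Γ C
  | negOrI : FDerivP Γ (.neg A) → FDerivP Γ (.neg B) → FDerivP Γ (.neg (.disj A B))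
  | negOrE1 : FDerivP Γ (.neg (.disj A B)) → FDerivP Γ (.neg A)
  | negOrE2 : FDerivP Γ (.neg (.disj A B)) → FDerivP Γ (.neg B)
  | dnI : FDerivP Γ A → FDerivP Γ (.neg (.neg A))
  | dnE : FDerivP Γ (.neg (.neg A)) → FDerivP Γ A
  | allI' : FDerivP Γ (subst x (Sum.inr c) A) → ¬ cOcc c A →
      (∀ G ∈ Γ, ¬ cOcc c G) → FDerivP Γ (.all x A)
  | allE : FDerivP Γ (.all x A) → FDerivP Γ (subst x (Sum.inr c) A)
  | exI : FDerivP Γ (subst x (Sum.inr c) A) → FDerivP Γ (.ex x A)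
  | exE : FDerivP Γ (.ex x A) → FDerivP (insert (subst x (Sum.inr c) A) Γ) C →
      ¬ cOcc c A → ¬ cOcc c C → (∀ G ∈ Γ, ¬ cOcc c G) → FDerivP Γ C
  | negAllI : FDerivP Γ (.neg (subst x (Sum.inr c) A)) → FDerivP Γ (.neg (.all x A))
  | negAllE : FDerivP Γ (.neg (.all x A)) → FDerivP (insert (.neg (subst x (Sum.inr c) A)) Γ) C →
      ¬ cOcc c A → ¬ cOcc c C → (∀ G ∈ Γ, ¬ cOcc c G) → FDerivP Γ C
  | negExI : FDerivP Γ (.neg (subst x (Sum.inr c) A)) → ¬ cOcc c A →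
      (∀ G ∈ Γ, ¬ cOcc c G) → FDerivP Γ (.neg (.ex x A))
  | negExE : FDerivP Γ (.neg (.ex x A)) → FDerivP Γ (.neg (subst x (Sum.inr c) A))
  | eqI : FDerivP Γ (.eq (Sum.inr c) (Sum.inr c))
  | eqE : FDerivP Γ (.eq (Sum.inr c₁) (Sum.inr c₂)) →
      FDerivP Γ (subst x (Sum.inr c₁) A) → FDerivP Γ (subst x (Sum.inr c₂) A)


/-! ### Auxiliary topological (frame-valued) semantics for `FDerivP` -/

open QLETF

/-- Interpretation of predicate letters for the countermodel. -/
def P0 : ℕ → List ℕ → Set ℝ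
  | 0, [] => {(0:ℝ)}ᶜ
  | 1, [d] => Set.Ioo (-(1/(d+1) : ℝ)) (1/(d+1))
  | _, _ => ∅

lemma P0_open (n : ℕ) (ts : List ℕ) : IsOpen (P0 n ts) := by
  unfold P0
  split
  · exact isOpen_compl_singleton
  · exact isOpen_Ioo
  · exact isOpen_empty

/-- Update a term valuation at the variable `x`. -/
def upd (ι : ℕ ⊕ ℕ → ℕ) (x : ℕ) (d : ℕ) : ℕ ⊕ ℕ → ℕ :=
  fun t => if t = Sum.inl x then d else ι t

lemma upd_inr (ι : ℕ ⊕ ℕ → ℕ) (x d c : ℕ) : upd ι x d (Sum.inr c) = ι (Sum.inr c) := by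
  simp [upd]

lemma upd_upd_same (ι : ℕ ⊕ ℕ → ℕ) (x k d : ℕ) : upd (upd ι x k) x d = upd ι x d := by
  funext t; unfold upd; split <;> rfl

lemma upd_comm (ι : ℕ ⊕ ℕ → ℕ) {x y : ℕ} (h : y ≠ x) (d k : ℕ) :
    upd (upd ι y d) x k = upd (upd ι x k) y d := by
  funext t
  unfold upd
  rcases t with y' | c
  · by_cases h1 : y' = x <;> by_cases h2 : y' = y <;> simp_all
  · simp

/-- Truth/falsity open sets of a formula, relative to a term valuation. -/
def val : Fm ℕ → (ℕ ⊕ ℕ → ℕ) → Set ℝ × Set ℝ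
  | .pred n ts, ι => (P0 n (ts.map ι), ∅)
  | .eq a b, ι => ({_p : ℝ | ι a = ι b}, ∅)
  | .neg A, ι => ((val A ι).2, (val A ι).1)
  | .conj A B, ι => ((val A ι).1 ∩ (val B ι).1, (val A ι).2 ∪ (val B ι).2)
  | .disj A B, ι => ((val A ι).1 ∪ (val B ι).1, (val A ι).2 ∩ (val B ι).2)
  | .cl _, _ => (∅, ∅)
  | .ncl _, _ => (∅, ∅)
  | .all x A, ι =>
      (interior (⋂ d : ℕ, (val A (upd ι x d)).1), ⋃ d : ℕ, (val A (upd ι x d)).2)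
  | .ex x A, ι =>
      (⋃ d : ℕ, (val A (upd ι x d)).1, interior (⋂ d : ℕ, (val A (upd ι x d)).2))

lemma val_open (A : Fm ℕ) : ∀ ι, IsOpen (val A ι).1 ∧ IsOpen (val A ι).2 := by
  induction A with
  | pred n ts => exact fun ι => ⟨P0_open _ _, isOpen_empty⟩
  | eq a b =>
      intro ι
      constructor
      · by_cases h : ι a = ι b <;> simp [val, h, isOpen_univ, Set.setOf_true, Set.setOf_false]
      · exact isOpen_empty
  | neg A ih => exact fun ι => ⟨(ih ι).2, (ih ι).1⟩
  | conj A B ihA ihB =>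
      exact fun ι => ⟨(ihA ι).1.inter (ihB ι).1, (ihA ι).2.union (ihB ι).2⟩
  | disj A B ihA ihB =>
      exact fun ι => ⟨(ihA ι).1.union (ihB ι).1, (ihA ι).2.inter (ihB ι).2⟩
  | cl A ih => exact fun _ => ⟨isOpen_empty, isOpen_empty⟩
  | ncl A ih => exact fun _ => ⟨isOpen_empty, isOpen_empty⟩
  | all x A ih =>
      exact fun ι => ⟨isOpen_interior, isOpen_iUnion fun d => (ih (upd ι x d)).2⟩
  | ex x A ih =>
      exact fun ι => ⟨isOpen_iUnion fun d => (ih (upd ι x d)).1, isOpen_interior⟩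

/-- `val` only depends on the valuation at constants occurring in the formula. -/
lemma val_congr {c : ℕ} : ∀ (A : Fm ℕ) {ι ι' : ℕ ⊕ ℕ → ℕ},
    (∀ t, t ≠ Sum.inr c → ι t = ι' t) → ¬ cOcc c A → val A ι = val A ι' := by
  intro A
  induction A with
  | pred n ts =>
      intro ι ι' h hA
      simp only [val]
      have : ts.map ι = ts.map ι' :=
        List.map_congr_left fun t ht => h t (fun e => hA (by simpa [cOcc, e] using ht))
      rw [this]
  | eq a b =>
      intro ι ι' h hA
      simp only [cOcc] at hA
      push_neg at hA
      simp only [val, h a hA.1, h b hA.2]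
  | neg A ih =>
      intro ι ι' h hA
      simp only [val, ih h hA]
  | conj A B ihA ihB =>
      intro ι ι' h hA
      simp only [cOcc] at hA
      push_neg at hA
      simp only [val, ihA h hA.1, ihB h hA.2]
  | disj A B ihA ihB =>
      intro ι ι' h hA
      simp only [cOcc] at hA
      push_neg at hA
      simp only [val, ihA h hA.1, ihB h hA.2]
  | cl A ih => intro ι ι' h hA; simp [val]
  | ncl A ih => intro ι ι' h hA; simp [val]
  | all x A ih =>
      intro ι ι' h hA
      have e : ∀ d : ℕ, val A (upd ι x d) = val A (upd ι' x d) := by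
        intro d
        refine ih (fun t ht => ?_) hA
        unfold upd; split
        · rfl
        · exact h t ht
      simp only [val, e]
  | ex x A ih =>
      intro ι ι' h hA
      have e : ∀ d : ℕ, val A (upd ι x d) = val A (upd ι' x d) := by
        intro d
        refine ih (fun t ht => ?_) hA
        unfold upd; split
        · rfl
        · exact h t ht
      simp only [val, e]

lemma evalT_substT (ι : ℕ ⊕ ℕ → ℕ) (x c : ℕ) (t : ℕ ⊕ ℕ) :
    ι (substT x (Sum.inr c) t) = upd ι x (ι (Sum.inr c)) t := by
  rcases t with y | c'
  · unfold substT upd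
    by_cases h : y = x <;> simp [h]
  · simp [substT, upd]

/-- Substitution lemma. -/
lemma val_subst (x c : ℕ) : ∀ (A : Fm ℕ) (ι : ℕ ⊕ ℕ → ℕ),
    val (subst x (Sum.inr c) A) ι = val A (upd ι x (ι (Sum.inr c))) := by
  intro A
  induction A with
  | pred n ts =>
      intro ι
      simp only [subst, val, List.map_map]
      congr 1
      exact congrArg _ (List.map_congr_left fun t _ => evalT_substT ι x c t)
  | eq a b =>
      intro ι
      simp only [subst, val, evalT_substT]
  | neg A ih => intro ι; simp only [subst, val, ih]
  | conj A B ihA ihB => intro ι; simp only [subst, val, ihA, ihB]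
  | disj A B ihA ihB => intro ι; simp only [subst, val, ihA, ihB]
  | cl A ih => intro ι; simp [subst, val]
  | ncl A ih => intro ι; simp [subst, val]
  | all y A ih =>
      intro ι
      by_cases h : y = x
      · subst h
        simp only [subst, if_pos rfl, ↓reduceIte, val, upd_upd_same]
      · simp only [subst, if_neg h, val]
        have e : ∀ d : ℕ, val (subst x (Sum.inr c) A) (upd ι y d)
            = val A (upd (upd ι x (ι (Sum.inr c))) y d) := by
          intro d
          rw [ih (upd ι y d), upd_inr, upd_comm ι h]
        simp only [e]
  | ex y A ih =>
      intro ι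
      by_cases h : y = x
      · subst h
        simp only [subst, if_pos rfl, ↓reduceIte, val, upd_upd_same]
      · simp only [subst, if_neg h, val]
        have e : ∀ d : ℕ, val (subst x (Sum.inr c) A) (upd ι y d)
            = val A (upd (upd ι x (ι (Sum.inr c))) y d) := by
          intro d
          rw [ih (upd ι y d), upd_inr, upd_comm ι h]
        simp only [e]

/-- The (open) truth set of a set of hypotheses. -/
def sem (Γ : Set (Fm ℕ)) (ι : ℕ ⊕ ℕ → ℕ) : Set ℝ :=
  interior (⋂ G ∈ Γ, (val G ι).1)

lemma sem_open (Γ : Set (Fm ℕ)) (ι : ℕ ⊕ ℕ → ℕ) : IsOpen (sem Γ ι) := isOpen_interior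

lemma sem_mem {Γ : Set (Fm ℕ)} {G : Fm ℕ} (hG : G ∈ Γ) (ι : ℕ ⊕ ℕ → ℕ) :
    sem Γ ι ⊆ (val G ι).1 :=
  interior_subset.trans (Set.biInter_subset_of_mem hG)

lemma sem_congr {c : ℕ} {Γ : Set (Fm ℕ)} {ι ι' : ℕ ⊕ ℕ → ℕ}
    (h : ∀ t, t ≠ Sum.inr c → ι t = ι' t) (hΓ : ∀ G ∈ Γ, ¬ cOcc c G) :
    sem Γ ι = sem Γ ι' := by
  have e : (⋂ G ∈ Γ, (val G ι).1) = ⋂ G ∈ Γ, (val G ι').1 :=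
    Set.iInter₂_congr fun G hG => congrArg Prod.fst (val_congr G h (hΓ G hG))
  unfold sem
  rw [e]

/-- Case-analysis helper corresponding to elimination rules with a minor premise. -/
lemma sem_case {Γ : Set (Fm ℕ)} {A C : Fm ℕ} {ι : ℕ ⊕ ℕ → ℕ}
    (ih : sem (insert A Γ) ι ⊆ (val C ι).1) {p : ℝ} (hp : p ∈ sem Γ ι)
    (hA : p ∈ (val A ι).1) : p ∈ (val C ι).1 := by
  apply ih
  have hsub : sem Γ ι ∩ (val A ι).1 ⊆ (val A ι).1 ∩ ⋂ G ∈ Γ, (val G ι).1 :=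
    fun q hq => ⟨hq.2, interior_subset hq.1⟩
  have := interior_maximal hsub ((sem_open Γ ι).inter (val_open A ι).1)
  rw [sem, Set.biInter_insert]
  exact this ⟨hp, hA⟩

/-- Soundness of QFDE′ for the topological semantics. -/
theorem soundP {Γ : Set (Fm ℕ)} {A : Fm ℕ} (h : FDerivP Γ A) :
    ∀ ι, sem Γ ι ⊆ (val A ι).1 := by
  induction h with
  | hyp hA => exact fun ι => sem_mem hA ι
  | andI _ _ ih1 ih2 =>
      intro ι; simp only [val]; exact Set.subset_inter (ih1 ι) (ih2 ι)
  | andE1 _ ih => intro ι; exact (ih ι).trans Set.inter_subset_left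
  | andE2 _ ih => intro ι; exact (ih ι).trans Set.inter_subset_right
  | orI1 _ ih => intro ι; exact (ih ι).trans Set.subset_union_left
  | orI2 _ ih => intro ι; exact (ih ι).trans Set.subset_union_right
  | orE _ _ _ ih1 ih2 ih3 =>
      intro ι p hp
      rcases ih1 ι hp with h | h
      · exact sem_case (ih2 ι) hp h
      · exact sem_case (ih3 ι) hp h
  | negAndI1 _ ih => intro ι; exact (ih ι).trans Set.subset_union_left
  | negAndI2 _ ih => intro ι; exact (ih ι).trans Set.subset_union_right
  | negAndE _ _ _ ih1 ih2 ih3 =>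
      intro ι p hp
      rcases ih1 ι hp with h | h
      · exact sem_case (ih2 ι) hp h
      · exact sem_case (ih3 ι) hp h
  | negOrI _ _ ih1 ih2 =>
      intro ι; exact Set.subset_inter (ih1 ι) (ih2 ι)
  | negOrE1 _ ih => intro ι; exact (ih ι).trans Set.inter_subset_left
  | negOrE2 _ ih => intro ι; exact (ih ι).trans Set.inter_subset_right
  | dnI _ ih => intro ι; exact ih ι
  | dnE _ ih => intro ι; exact ih ι
  | @allI' Γ x c A _ hcA hcΓ ih =>
      intro ι
      simp only [val]
      apply interior_maximal _ (sem_open Γ ι)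
      refine Set.subset_iInter fun d => ?_
      set ι' : ℕ ⊕ ℕ → ℕ := fun t => if t = Sum.inr c then d else ι t with hι'
      have hag : ∀ t, t ≠ Sum.inr c → ι t = ι' t := fun t ht => by simp [hι', ht]
      have h1 : sem Γ ι = sem Γ ι' := sem_congr hag hcΓ
      have h2 := ih ι'
      rw [val_subst] at h2
      have h3 : ι' (Sum.inr c) = d := by simp [hι']
      rw [h3] at h2
      have h4 : val A (upd ι' x d) = val A (upd ι x d) := by
        refine val_congr A (fun t ht => ?_) hcA
        unfold upd; split
        · rfl
        · exact (hag t ht).symm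
      rw [h1]
      exact h2.trans (le_of_eq (congrArg Prod.fst h4))
  | allE _ ih =>
      intro ι
      rw [val_subst]
      exact (ih ι).trans (interior_subset.trans (Set.iInter_subset _ _))
  | exI _ ih =>
      intro ι
      refine (ih ι).trans ?_
      rw [val_subst]
      exact Set.subset_iUnion (fun d => (val _ (upd ι _ d)).1) _
  | @exE Γ x A c C _ _ hcA hcC hcΓ ih1 ih2 =>
      intro ι p hp
      have hx := ih1 ι hp
      simp only [val, Set.mem_iUnion] at hx
      obtain ⟨d, hd⟩ := hx
      set ι' : ℕ ⊕ ℕ → ℕ := fun t => if t = Sum.inr c then d else ι t with hι'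
      have hag : ∀ t, t ≠ Sum.inr c → ι t = ι' t := fun t ht => by simp [hι', ht]
      have hsem : sem Γ ι = sem Γ ι' := sem_congr hag hcΓ
      have hC : val C ι = val C ι' := val_congr C hag hcC
      have h5 : (val (subst x (Sum.inr c) A) ι').1 = (val A (upd ι x d)).1 := by
        rw [val_subst]
        have h3 : ι' (Sum.inr c) = d := by simp [hι']
        rw [h3]
        have h4 : val A (upd ι' x d) = val A (upd ι x d) := by
          refine val_congr A (fun t ht => ?_) hcA
          unfold upd; split
          · rfl
          · exact (hag t ht).symm
        rw [h4]
      rw [hC]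
      rw [hsem] at hp
      exact sem_case (ih2 ι') hp (h5.symm ▸ hd)
  | negAllI _ ih =>
      intro ι
      refine (ih ι).trans ?_
      simp only [val]
      rw [val_subst]
      exact Set.subset_iUnion (fun d => (val _ (upd ι _ d)).2) _
  | @negAllE Γ x A C c _ _ hcA hcC hcΓ ih1 ih2 =>
      intro ι p hp
      have hx := ih1 ι hp
      simp only [val, Set.mem_iUnion] at hx
      obtain ⟨d, hd⟩ := hx
      set ι' : ℕ ⊕ ℕ → ℕ := fun t => if t = Sum.inr c then d else ι t with hι'
      have hag : ∀ t, t ≠ Sum.inr c → ι t = ι' t := fun t ht => by simp [hι', ht]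
      have hsem : sem Γ ι = sem Γ ι' := sem_congr hag hcΓ
      have hC : val C ι = val C ι' := val_congr C hag hcC
      have h5 : (val (Fm.neg (subst x (Sum.inr c) A)) ι').1 = (val A (upd ι x d)).2 := by
        simp only [val]
        rw [val_subst]
        have h3 : ι' (Sum.inr c) = d := by simp [hι']
        rw [h3]
        have h4 : val A (upd ι' x d) = val A (upd ι x d) := by
          refine val_congr A (fun t ht => ?_) hcA
          unfold upd; split
          · rfl
          · exact (hag t ht).symm
        rw [h4]
      rw [hC]
      rw [hsem] at hp
      exact sem_case (ih2 ι') hp (h5.symm ▸ hd)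
  | @negExI Γ x c A _ hcA hcΓ ih =>
      intro ι
      simp only [val]
      apply interior_maximal _ (sem_open Γ ι)
      refine Set.subset_iInter fun d => ?_
      set ι' : ℕ ⊕ ℕ → ℕ := fun t => if t = Sum.inr c then d else ι t with hι'
      have hag : ∀ t, t ≠ Sum.inr c → ι t = ι' t := fun t ht => by simp [hι', ht]
      have h1 : sem Γ ι = sem Γ ι' := sem_congr hag hcΓ
      have h2 := ih ι'
      simp only [val] at h2
      rw [val_subst] at h2
      have h3 : ι' (Sum.inr c) = d := by simp [hι']
      rw [h3] at h2
      have h4 : val A (upd ι' x d) = val A (upd ι x d) := by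
        refine val_congr A (fun t ht => ?_) hcA
        unfold upd; split
        · rfl
        · exact (hag t ht).symm
      rw [h1]
      exact h2.trans (le_of_eq (congrArg Prod.snd h4))
  | negExE _ ih =>
      intro ι
      simp only [val]
      rw [val_subst]
      exact (ih ι).trans (interior_subset.trans (Set.iInter_subset _ _))
  | eqI =>
      intro ι p _
      simp [val]
  | @eqE Γ c₁ c₂ x A _ _ ih1 ih2 =>
      intro ι p hp
      have he : ι (Sum.inr c₁) = ι (Sum.inr c₂) := ih1 ι hp
      have h2 := ih2 ι hp
      rw [val_subst] at h2 ⊢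
      rw [← he]
      exact h2

/-- The rule ∀I′ does not suffice: there are `B`, `A` with `x` not free in `B`
such that `∀x(B ∨ A) ⊢ B ∨ ∀xA` is semantically valid in the standard
extension/anti-extension semantics of quantified FDE, but is not derivable in
QFDE′; hence QFDE′ is incomplete with respect to that semantics. -/
theorem qfde_prime_incomplete :
    ∃ (B A : Fm ℕ) (x : ℕ), clFree B ∧ clFree A ∧ x ∉ fv B ∧
      Closed (Fm.all x (.disj B A)) ∧
      SemConsF (fun _ _ => True) {Fm.all x (.disj B A)} (.disj B (.all x A)) ∧
      ¬ FDerivP ({Fm.all x (.disj B A)} : Set (Fm ℕ)) (.disj B (.all x A)) := by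
  refine ⟨.pred 0 [], .pred 1 [Sum.inl 0], 0, trivial, trivial, ?_, ?_, ?_, ?_⟩
  · simp [fv]
  · simp [Closed, fv, Set.eq_empty_iff_forall_notMem]
  · -- semantic validity
    intro D S v _ _ vc hΓ
    have hsat := hΓ _ rfl
    simp only [Sat, Fm.map, List.map, Sum.map, id] at hsat ⊢
    have hfv : fv (Fm.disj (Fm.pred 0 ([] : List (ℕ ⊕ (ℕ ⊕ D))))
        (Fm.pred 1 [Sum.inl 0])) ⊆ {0} := by
      intro y hy
      simp [fv] at hy
      simp [hy]
    have h1 := (vc.allC 0 _ hfv).mp hsat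
    have cB : Closed (Fm.pred 0 ([] : List (ℕ ⊕ (ℕ ⊕ D)))) := by
      simp [Closed, fv, Set.eq_empty_iff_forall_notMem]
    have cAll : Closed (Fm.all 0 (Fm.pred 1 [Sum.inl 0] : Fm (ℕ ⊕ D))) := by
      simp [Closed, fv, Set.eq_empty_iff_forall_notMem]
    apply (vc.orC _ _ cB cAll).mpr
    by_cases hb : v (Fm.pred 0 ([] : List (ℕ ⊕ (ℕ ⊕ D)))) = true
    · exact Or.inl hb
    · have hfv2 : fv (Fm.pred 1 [Sum.inl 0] : Fm (ℕ ⊕ D)) ⊆ {0} := by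
        intro y hy
        simp [fv] at hy
        simp [hy]
      refine Or.inr ((vc.allC 0 _ hfv2).mpr fun d => ?_)
      have h2 := h1 d
      simp only [subst, substT, List.map, if_pos rfl] at h2 ⊢
      have cA : Closed (Fm.pred 1 [Sum.inr (Sum.inr d)] : Fm (ℕ ⊕ D)) := by
        simp [Closed, fv, Set.eq_empty_iff_forall_notMem]
      exact ((vc.orC _ _ cB cA).mp h2).resolve_left hb
  · -- non-derivability
    intro hder
    have hs := soundP hder (fun _ => 0)
    set ι : ℕ ⊕ ℕ → ℕ := fun _ => 0 with hι
    have e1 : ∀ (κ : ℕ ⊕ ℕ → ℕ) (d : ℕ), List.map (upd κ 0 d) [Sum.inl (0:ℕ)] = [d] := by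
      intro κ d
      simp [upd]
    have p00 : P0 0 ([] : List ℕ) = {(0:ℝ)}ᶜ := rfl
    have p01 : ∀ d : ℕ, P0 1 [d] = Set.Ioo (-(1/(d+1) : ℝ)) (1/(d+1)) := fun d => rfl
    -- the hypothesis has truth set univ
    have hhyp : (val (Fm.all 0 (Fm.disj (Fm.pred 0 []) (Fm.pred 1 [Sum.inl 0]))) ι).1
        = Set.univ := by
      simp only [val, List.map_nil, List.map_cons, e1, p00, p01]
      have : (⋂ d : ℕ, ({(0:ℝ)}ᶜ ∪ Set.Ioo (-(1/(d+1) : ℝ)) (1/(d+1)))) = Set.univ := by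
        refine Set.eq_univ_of_forall fun p => ?_
        refine Set.mem_iInter.mpr fun d => ?_
        by_cases hp : p = (0:ℝ)
        · subst hp
          refine Or.inr ⟨?_, ?_⟩
          · have : (0:ℝ) < 1/(d+1) := by positivity
            linarith
          · positivity
        · exact Or.inl hp
      rw [this, interior_univ]
    have hmem : (0:ℝ) ∈ sem ({Fm.all 0 (Fm.disj (Fm.pred 0 []) (Fm.pred 1 [Sum.inl 0]))} :
        Set (Fm ℕ)) ι := by
      unfold sem
      rw [Set.biInter_singleton, hhyp, interior_univ]
      trivial
    have h0 := hs hmem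
    simp only [val, List.map_nil, List.map_cons, e1, p00, p01] at h0
    rcases h0 with h0 | h0
    · exact h0 rfl
    · -- 0 in the interior of ⋂ Ioo, impossible
      have hSsub : (⋂ d : ℕ, Set.Ioo (-(1/(d+1) : ℝ)) (1/(d+1))) ⊆ {(0:ℝ)} := by
        intro z hz
        simp only [Set.mem_iInter, Set.mem_Ioo] at hz
        have hz0 : z = 0 := by
          by_contra hne
          obtain ⟨n, hn⟩ := exists_nat_one_div_lt (abs_pos.mpr hne)
          have habs : |z| < 1/((n:ℝ)+1) := abs_lt.mpr ⟨(hz n).1, (hz n).2⟩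
          linarith
        simp [hz0]
      have := interior_mono hSsub h0
      rw [interior_singleton] at this
      exact this

end S17
end
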